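/- With notation as in the context, taking M = T (as a module over itself): the congruence module C_0^λ(T) = eT/(eT ∩ T) is isomorphic as an 𝒪-module to 𝒪/λ(T[ker λ]) = 𝒪/λ(Ann_T(ker λ)), and consequently η_λ(T) = η_λ, i.e. Fitt_𝒪(eT/(eT ∩ T)) = λ(Ann_T(ker λ)). -/

import Mathlib

/-- The 0-th Fitting ideal of a module `N` over a commutative ring `R`: the ideal generated
by the determinants of `n × n` matrices all of whose columns are relations for some
`n`-element generating family of `N`. -/
def fittingIdeal (R : Type*) [CommRing R] (N : Type*) [AddCommGroup N] [Module R N] :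
    Ideal R :=
  Ideal.span { r : R | ∃ (n : ℕ) (π : (Fin n → R) →ₗ[R] N) (_ : Function.Surjective π)
    (A : Matrix (Fin n) (Fin n) R), (∀ j, π (fun i => A i j) = 0) ∧ r = A.det }

lemma fittingIdeal_le_ann (R : Type*) [CommRing R] (N : Type*) [AddCommGroup N] [Module R N] :
    fittingIdeal R N ≤ Module.annihilator R N := by
  rw [fittingIdeal, Ideal.span_le]
  rintro r ⟨n, π, hπ, A, hA, rfl⟩
  rw [SetLike.mem_coe, Module.mem_annihilator]
  intro x
  obtain ⟨f, rfl⟩ := hπ x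
  rw [← π.map_smul]
  have h1 : A.det • f = A.mulVec (A.adjugate.mulVec f) := by
    rw [Matrix.mulVec_mulVec, Matrix.mul_adjugate, Matrix.smul_mulVec,
      Matrix.one_mulVec]
  rw [h1]
  have h2 : A.mulVec (A.adjugate.mulVec f)
      = ∑ j, (A.adjugate.mulVec f) j • (fun i => A i j) := by
    funext i
    simp [Matrix.mulVec, dotProduct, Finset.sum_apply, mul_comm]
  rw [h2, map_sum]
  simp [_root_.map_smul, hA]

lemma fittingIdeal_le_of_equiv {R : Type*} [CommRing R] {N N' : Type*} [AddCommGroup N]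
    [Module R N] [AddCommGroup N'] [Module R N'] (g : N ≃ₗ[R] N') :
    fittingIdeal R N ≤ fittingIdeal R N' := by
  rw [fittingIdeal, Ideal.span_le]
  rintro r ⟨n, π, hπ, A, hA, rfl⟩
  apply Ideal.subset_span
  refine ⟨n, g.toLinearMap ∘ₗ π, g.surjective.comp hπ, A, fun j => ?_, rfl⟩
  rw [LinearMap.comp_apply, hA j, map_zero]

lemma fittingIdeal_congr {R : Type*} [CommRing R] {N N' : Type*} [AddCommGroup N] [Module R N]
    [AddCommGroup N'] [Module R N'] (eqv : N ≃ₗ[R] N') :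
    fittingIdeal R N = fittingIdeal R N' :=
  le_antisymm (fittingIdeal_le_of_equiv eqv) (fittingIdeal_le_of_equiv eqv.symm)

lemma fittingIdeal_quotient {R : Type*} [CommRing R] [IsPrincipalIdealRing R] (J : Ideal R) :
    fittingIdeal R (R ⧸ J) = J := by
  refine le_antisymm ?_ ?_
  · intro r hr
    have := Module.mem_annihilator.mp (fittingIdeal_le_ann R (R ⧸ J) hr)
      (Submodule.Quotient.mk (1 : R))
    rwa [← Submodule.Quotient.mk_smul, smul_eq_mul, mul_one,
      Submodule.Quotient.mk_eq_zero] at this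
  · obtain ⟨a, ha⟩ := (IsPrincipalIdealRing.principal J).principal
    have haJ : a ∈ J := by rw [ha]; exact Submodule.subset_span rfl
    have haf : a ∈ fittingIdeal R (R ⧸ J) := by
      apply Ideal.subset_span
      refine ⟨1, (J.mkQ : R →ₗ[R] R ⧸ J) ∘ₗ LinearMap.proj 0, ?_, fun _ _ => a, fun j => ?_, ?_⟩
      · intro x
        obtain ⟨y, rfl⟩ := J.mkQ_surjective x
        exact ⟨fun _ => y, rfl⟩
      · simpa [Ideal.Quotient.eq_zero_iff_mem] using haJ
      · exact (Matrix.det_fin_one (fun _ _ => a : Matrix (Fin 1) (Fin 1) R)).symm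
    intro b hb
    rw [ha, Ideal.submodule_span_eq, Ideal.mem_span_singleton] at hb
    obtain ⟨c, rfl⟩ := hb
    exact Ideal.mul_mem_right _ _ haf

/-- The `𝒪`-submodule `e·T` of `T_E`. -/
noncomputable def eTsub (O T TE : Type*) [CommRing O] [CommRing T] [CommRing TE]
    [Algebra O T] [Algebra O TE] [Algebra T TE] [IsScalarTower O T TE] (e : TE) :
    Submodule O TE :=
  Submodule.span O {x : TE | ∃ t : T, x = e * algebraMap T TE t}

/-- The `𝒪`-submodule `T ⊆ T_E` (image of `T`). -/
noncomputable def Tsub (O T TE : Type*) [CommRing O] [CommRing T] [CommRing TE]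
    [Algebra O T] [Algebra O TE] [Algebra T TE] [IsScalarTower O T TE] :
    Submodule O TE :=
  LinearMap.range ((IsScalarTower.toAlgHom O T TE).toLinearMap)

/-- The congruence module `C₀^λ(T) = e·T/(e·T ∩ T)`, formed inside `T_E`. -/
noncomputable abbrev C0T (O T TE : Type*) [CommRing O] [CommRing T] [CommRing TE]
    [Algebra O T] [Algebra O TE] [Algebra T TE] [IsScalarTower O T TE] (e : TE) :=
  ↥(eTsub O T TE e) ⧸
    (Submodule.comap (eTsub O T TE e).subtype (eTsub O T TE e ⊓ Tsub O T TE))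

/-- With `𝒪` a complete DVR with fraction field `E`, `T` a commutative
reduced finite flat local `𝒪`-algebra, `λ : T → 𝒪` an `𝒪`-algebra homomorphism, and `e`
the idempotent of `T_E = T ⊗_𝒪 E` attached to `λ`: the congruence module
`C₀^λ(T) = eT/(eT ∩ T)` is isomorphic as an `𝒪`-module to `𝒪/λ(Ann_T(ker λ))`, and its
Fitting ideal `η_λ(T)` equals `η_λ = λ(Ann_T(ker λ))`. -/
theorem statement3
    {O : Type*} [CommRing O] [IsDomain O] [IsDiscreteValuationRing O]
    [IsAdicComplete (IsLocalRing.maximalIdeal O) O]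
    {E : Type*} [Field E] [Algebra O E] [IsFractionRing O E]
    {T : Type*} [CommRing T] [IsReduced T] [IsLocalRing T]
    [Algebra O T] [Module.Finite O T] [Module.Flat O T]
    {TE : Type*} [CommRing TE] [Algebra T TE] [Algebra O TE] [Algebra E TE]
    [IsScalarTower O T TE] [IsScalarTower O E TE]
    [IsLocalization (Algebra.algebraMapSubmonoid T (nonZeroDivisors O)) TE]
    (lam : T →ₐ[O] O)
    (lamE : TE →ₐ[E] E) (e : TE)
    (hlamE : ∀ t : T, lamE (algebraMap T TE t) = algebraMap O E (lam t))
    (he1 : lamE e = 1)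
    (he2 : ∀ P : Ideal TE, P.IsPrime → P ≠ RingHom.ker lamE → e ∈ P) :
    Nonempty ((C0T O T TE e) ≃ₗ[O]
        (O ⧸ Ideal.map lam (Submodule.annihilator (RingHom.ker lam)))) ∧
    fittingIdeal O (C0T O T TE e) = Ideal.map lam (Submodule.annihilator (RingHom.ker lam)) := by
  set M := Algebra.algebraMapSubmonoid T (nonZeroDivisors O) with hM
  set J := Ideal.map lam (Submodule.annihilator (RingHom.ker lam)) with hJdef
  -- injectivity of O → E
  have hInjE : Function.Injective (algebraMap O E) := IsFractionRing.injective O E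
  -- algebraMap T TE is injective
  have hMle : M ≤ nonZeroDivisors T := by
    rintro _ ⟨c, hc, rfl⟩
    refine mem_nonZeroDivisors_iff_right.mpr fun x hx => ?_
    have hreg : IsSMulRegular T c := by
      have h0 : IsSMulRegular O c := by
        intro a b hab
        exact mul_left_cancel₀ (nonZeroDivisors.ne_zero hc)
          (by simpa [smul_eq_mul, mul_comm] using hab)
      have h1 : IsSMulRegular (TensorProduct O O T) c := h0.rTensor (M := T)
      exact h1.of_injective (TensorProduct.lid O T).symm.toLinearMap
        (TensorProduct.lid O T).symm.injective
    apply hreg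
    show c • x = c • 0
    rw [smul_zero, Algebra.smul_def, mul_comm]
    exact hx
  have hinj : Function.Injective (algebraMap T TE) := IsLocalization.injective TE hMle
  -- TE is reduced
  haveI hredTE : IsReduced TE := by
    constructor
    rintro x ⟨n, hn⟩
    rcases n with _ | n
    · simpa using congr_arg (· * x) hn
    obtain ⟨⟨y, m⟩, hym⟩ := IsLocalization.surj M x
    have hy : algebraMap T TE (y ^ (n + 1)) = 0 := by
      rw [map_pow, ← hym, mul_pow, hn, zero_mul]
    have hy0 : y = 0 := by
      have : IsNilpotent y := ⟨n + 1, hinj (by rw [hy, map_zero])⟩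
      exact this.eq_zero
    have hxm : x * algebraMap T TE m = 0 := by rw [hym, hy0, map_zero]
    exact ((IsLocalization.map_units TE m).mul_left_eq_zero).mp hxm
  have hzero : ∀ z : TE, (∀ P : Ideal TE, P.IsPrime → z ∈ P) → z = 0 := by
    intro z hz
    exact (nilpotent_iff_mem_prime.mpr fun P hP => hz P hP).eq_zero
  have hkerprime : (RingHom.ker lamE).IsPrime := RingHom.ker_isPrime lamE
  -- Lemma A
  have hA : ∀ t : T, lam t = 0 → e * algebraMap T TE t = 0 := by
    intro t ht
    apply hzero
    intro P hP
    by_cases hPk : P = RingHom.ker lamE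
    · subst hPk
      rw [RingHom.mem_ker, map_mul, he1, one_mul, hlamE, ht, map_zero]
    · exact P.mul_mem_right _ (he2 P hP hPk)
  -- contraction of ker lamE is ker lam
  have hcomapker : Ideal.comap (algebraMap T TE) (RingHom.ker lamE) = RingHom.ker lam := by
    ext t
    rw [Ideal.mem_comap, RingHom.mem_ker, RingHom.mem_ker, hlamE]
    constructor
    · intro h; exact hInjE (by rw [h, map_zero])
    · intro h; rw [h, map_zero]
  -- Lemma B
  have hB : ∀ s : T, s ∈ Submodule.annihilator (RingHom.ker lam) →
      e * algebraMap T TE s = algebraMap T TE s := by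
    intro s hs
    have key : (1 - e) * algebraMap T TE s = 0 := by
      apply hzero
      intro P hP
      by_cases hPk : P = RingHom.ker lamE
      · subst hPk
        rw [RingHom.mem_ker, map_mul, map_sub, map_one, he1, sub_self, zero_mul]
      · apply P.mul_mem_left
        set p := Ideal.comap (algebraMap T TE) P with hp
        haveI hpP : p.IsPrime := hP.comap _
        by_cases hker : RingHom.ker lam ≤ p
        · exfalso
          have hpk : p = RingHom.ker lam := by
            refine le_antisymm ?_ hker
            intro t htp
            rw [RingHom.mem_ker]
            by_contra hc
            have hcnz : lam t ∈ nonZeroDivisors O := mem_nonZeroDivisors_of_ne_zero hc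
            have h1 : t - algebraMap O T (lam t) ∈ RingHom.ker lam := by
              rw [RingHom.mem_ker, map_sub, lam.commutes]
              simp
            have h2 : algebraMap O T (lam t) ∈ p := by
              have := p.sub_mem htp (hker h1)
              simpa using this
            have hmemM : algebraMap O T (lam t) ∈ M := ⟨lam t, hcnz, rfl⟩
            have h4 : IsUnit (algebraMap T TE (algebraMap O T (lam t))) :=
              IsLocalization.map_units TE (⟨_, hmemM⟩ : M)
            exact hP.ne_top (P.eq_top_of_isUnit_mem h2 h4)
          apply hPk
          have h5 : Ideal.map (algebraMap T TE) (Ideal.comap (algebraMap T TE) P) = P :=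
            IsLocalization.map_comap M TE P
          have h6 : Ideal.map (algebraMap T TE) (Ideal.comap (algebraMap T TE) (RingHom.ker lamE))
              = RingHom.ker lamE := IsLocalization.map_comap M TE (RingHom.ker lamE)
          rw [← h5, ← h6, hcomapker, ← hpk]
        · obtain ⟨x, hx, hxp⟩ := SetLike.not_le_iff_exists.mp hker
          have hsx : s * x = 0 := Submodule.mem_annihilator.mp hs x hx
          have h0 : algebraMap T TE s * algebraMap T TE x = 0 := by
            rw [← map_mul, hsx, map_zero]
          rcases hP.mem_or_mem (h0 ▸ P.zero_mem) with h | h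
          · exact h
          · exact absurd h hxp
    rw [sub_mul, one_mul, sub_eq_zero] at key
    exact key.symm
  -- the linear map μ : T → TE, t ↦ e * alg t, with range eT
  set ι : T →ₗ[O] TE := (IsScalarTower.toAlgHom O T TE).toLinearMap with hι
  set μ : T →ₗ[O] TE := (LinearMap.mulLeft O e) ∘ₗ ι with hμdef
  have hμ : ∀ t : T, μ t = e * algebraMap T TE t := fun t => rfl
  have heT : eTsub O T TE e = LinearMap.range μ := by
    apply le_antisymm
    · rw [eTsub, Submodule.span_le]
      rintro x ⟨t, rfl⟩
      exact ⟨t, rfl⟩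
    · rintro x ⟨t, rfl⟩
      exact Submodule.subset_span ⟨t, rfl⟩
  -- lamE as O-linear map
  set φ : TE →ₗ[O] E := lamE.toLinearMap.restrictScalars O with hφ
  have hφval : ∀ x : TE, φ x = lamE x := fun _ => rfl
  set f : O →ₗ[O] E := Algebra.linearMap O E with hf
  set OE : Submodule O E := LinearMap.range f with hOE
  have hval : ∀ x ∈ eTsub O T TE e, φ x ∈ OE := by
    intro x hx
    rw [heT] at hx
    obtain ⟨t, rfl⟩ := hx
    refine ⟨lam t, ?_⟩
    rw [hf, Algebra.linearMap_apply, hφval, hμ, map_mul, he1, one_mul, hlamE]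
  set θ₀ : ↥(eTsub O T TE e) →ₗ[O] ↥OE :=
    LinearMap.codRestrict OE (φ ∘ₗ (eTsub O T TE e).subtype) (fun x => hval x.1 x.2) with hθ₀
  set eqv : O ≃ₗ[O] ↥OE := LinearEquiv.ofInjective f (by
      intro a b hab
      exact hInjE (by simpa [hf, Algebra.linearMap_apply] using hab)) with heqv
  set θ : ↥(eTsub O T TE e) →ₗ[O] (O ⧸ J) :=
    J.mkQ ∘ₗ (eqv.symm.toLinearMap ∘ₗ θ₀) with hθ
  have hθval : ∀ (x : ↥(eTsub O T TE e)) (r : O), lamE (x : TE) = algebraMap O E r →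
      θ x = Submodule.Quotient.mk r := by
    intro x r hr
    have h1 : eqv.symm (θ₀ x) = r := by
      apply eqv.injective
      rw [eqv.apply_symm_apply]
      apply Subtype.ext
      have h2 : ((eqv r : ↥OE) : E) = f r := LinearEquiv.ofInjective_apply _ _
      have h3 : ((θ₀ x : ↥OE) : E) = lamE (x : TE) := rfl
      rw [h2, h3, hr, hf, Algebra.linearMap_apply]
    rw [hθ]
    simp only [LinearMap.comp_apply, LinearEquiv.coe_toLinearMap, h1]
    rfl
  -- surjectivity
  have hsurj : Function.Surjective θ := by
    intro y
    obtain ⟨r, rfl⟩ := J.mkQ_surjective y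
    have hmem : e * algebraMap T TE (algebraMap O T r) ∈ eTsub O T TE e :=
      Submodule.subset_span ⟨algebraMap O T r, rfl⟩
    refine ⟨⟨_, hmem⟩, ?_⟩
    apply hθval
    rw [map_mul, he1, one_mul, hlamE, lam.commutes]
    simp
  -- kernel
  have hker : LinearMap.ker θ
      = Submodule.comap (eTsub O T TE e).subtype (eTsub O T TE e ⊓ Tsub O T TE) := by
    ext x
    rw [LinearMap.mem_ker, Submodule.mem_comap, Submodule.mem_inf]
    constructor
    · intro hx0
      obtain ⟨t, ht⟩ : ∃ t, μ t = (x : TE) := heT.le x.2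
      have hlamEx : lamE (x : TE) = algebraMap O E (lam t) := by
        rw [← ht, hμ, map_mul, he1, one_mul, hlamE]
      have hx0' : Submodule.Quotient.mk (p := J) (lam t) = 0 := by
        rw [← hθval x (lam t) hlamEx]; exact hx0
      rw [Submodule.Quotient.mk_eq_zero] at hx0'
      obtain ⟨s, hsann, hslam⟩ :=
        Ideal.mem_map_iff_of_surjective (lam : T →+* O)
          (fun r => ⟨algebraMap O T r, lam.commutes r⟩) |>.mp hx0'
      have hes : e * algebraMap T TE s = algebraMap T TE s := hB s hsann
      have hxs : (x : TE) = algebraMap T TE s := by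
        have hslam' : lam s = lam t := hslam
        have hdiff : lam (t - s) = 0 := by rw [map_sub, hslam', sub_self]
        have h0 : e * algebraMap T TE (t - s) = 0 := hA _ hdiff
        rw [map_sub, mul_sub, sub_eq_zero] at h0
        rw [← ht, hμ, h0, hes]
      constructor
      · exact x.2
      · exact ⟨s, hxs.symm⟩
    · rintro ⟨-, ⟨s, hs⟩⟩
      have hxs : (x : TE) = algebraMap T TE s := hs.symm
      obtain ⟨t, ht⟩ : ∃ t, μ t = (x : TE) := heT.le x.2
      have hsann : s ∈ Submodule.annihilator (RingHom.ker lam) := by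
        rw [Submodule.mem_annihilator]
        intro y hy
        apply hinj
        rw [map_zero, smul_eq_mul, map_mul]
        have : algebraMap T TE s = e * algebraMap T TE t := by rw [← hxs, ← ht, hμ]
        rw [this, mul_assoc, mul_comm (algebraMap T TE t), ← mul_assoc,
          hA y (by rwa [← RingHom.mem_ker]), zero_mul]
      have hlamEx : lamE (x : TE) = algebraMap O E (lam s) := by rw [hxs, hlamE]
      rw [hθval x (lam s) hlamEx, Submodule.Quotient.mk_eq_zero]
      exact Ideal.mem_map_of_mem _ hsann
  -- conclude
  have eqv1 : (C0T O T TE e) ≃ₗ[O] (↥(eTsub O T TE e) ⧸ LinearMap.ker θ) :=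
    Submodule.quotEquivOfEq _ _ hker.symm
  have eqv2 : (↥(eTsub O T TE e) ⧸ LinearMap.ker θ) ≃ₗ[O] (O ⧸ J) :=
    θ.quotKerEquivOfSurjective hsurj
  refine ⟨⟨eqv1.trans eqv2⟩, ?_⟩
  rw [fittingIdeal_congr (eqv1.trans eqv2), fittingIdeal_quotient]
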